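/- (Gessel–Lv–Xin–Zhou) Let a_1, ..., a_n be fixed nonnegative integers and L(x_1,...,x_n) a Laurent polynomial over ℚ. Then the function f(a_0) = constant term of ∏_{l=1}^n (1 − x_l/x_0)^{a_0}(1 − x_0/x_l)^{a_l} · L(x_1,...,x_n) is a polynomial in a_0 of degree at most a_1 + ... + a_n, and the coefficient of a_0^{a_1+...+a_n} in this polynomial equals 1/(a_1+...+a_n)! times the constant term of (x_1 + ... + x_n)^{a_1+...+a_n} · ∏_{l=1}^n x_l^{−a_l} · L(x_1,...,x_n). -/

import Mathlib

open Finset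

/-- Multivariate Laurent monomial `x^v` in the group algebra `ℚ[ℤ^N]`. -/
noncomputable def laurentMonomial {N : ℕ} (v : Fin N → ℤ) :
    AddMonoidAlgebra ℚ (Fin N →₀ ℤ) :=
  AddMonoidAlgebra.single (Finsupp.equivFunOnFinite.symm v) 1

/-- The constant term of a Laurent polynomial in `N` variables. -/
noncomputable def constantTerm {N : ℕ} (f : AddMonoidAlgebra ℚ (Fin N →₀ ℤ)) : ℚ :=
  (AddMonoidAlgebra.coeff f : (Fin N →₀ ℤ) →₀ ℚ) 0

namespace GLXZ

lemma lm_zero {N : ℕ} : laurentMonomial (0 : Fin N → ℤ) = 1 := by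
  unfold laurentMonomial
  rw [AddMonoidAlgebra.one_def]
  congr 1
  ext k; simp

lemma lm_mul {N : ℕ} (v w : Fin N → ℤ) :
    laurentMonomial v * laurentMonomial w = laurentMonomial (v + w) := by
  unfold laurentMonomial
  rw [AddMonoidAlgebra.single_mul_single, one_mul]
  congr 1
  ext k; simp

lemma lm_pow {N : ℕ} (v : Fin N → ℤ) (k : ℕ) :
    (laurentMonomial v) ^ k = laurentMonomial ((k : ℤ) • v) := by
  induction k with
  | zero => simpa using lm_zero.symm
  | succ k ih =>
      rw [pow_succ, ih, lm_mul]
      congr 1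
      push_cast
      rw [add_smul, one_smul]

lemma lm_prod {N : ℕ} {ι : Type*} (s : Finset ι) (v : ι → Fin N → ℤ) :
    ∏ i ∈ s, laurentMonomial (v i) = laurentMonomial (∑ i ∈ s, v i) := by
  induction s using Finset.cons_induction with
  | empty => simpa using lm_zero.symm
  | cons i s hi ih => rw [prod_cons, sum_cons, ih, lm_mul]

lemma ct_add {N : ℕ} (f g : AddMonoidAlgebra ℚ (Fin N →₀ ℤ)) :
    constantTerm (f + g) = constantTerm f + constantTerm g := rfl

lemma ct_sum {N : ℕ} {ι : Type*} (s : Finset ι) (f : ι → AddMonoidAlgebra ℚ (Fin N →₀ ℤ)) :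
    constantTerm (∑ i ∈ s, f i) = ∑ i ∈ s, constantTerm (f i) := by
  induction s using Finset.cons_induction with
  | empty => simp [constantTerm]
  | cons i s hi ih => rw [sum_cons, sum_cons, ct_add, ih]

lemma ct_smul {N : ℕ} (q : ℚ) (f : AddMonoidAlgebra ℚ (Fin N →₀ ℤ)) :
    constantTerm (q • f) = q * constantTerm f := rfl

lemma ct_natCast_mul {N : ℕ} (m : ℕ) (f : AddMonoidAlgebra ℚ (Fin N →₀ ℤ)) :
    constantTerm ((m : AddMonoidAlgebra ℚ (Fin N →₀ ℤ)) * f) = m * constantTerm f := by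
  rw [← nsmul_eq_mul, ← Nat.cast_smul_eq_nsmul ℚ, ct_smul]

lemma ct_intCast_mul {N : ℕ} (z : ℤ) (f : AddMonoidAlgebra ℚ (Fin N →₀ ℤ)) :
    constantTerm ((z : AddMonoidAlgebra ℚ (Fin N →₀ ℤ)) * f) = z * constantTerm f := by
  rw [← zsmul_eq_mul, ← Int.cast_smul_eq_zsmul ℚ, ct_smul]

lemma ct_lm_mul {N : ℕ} (v : Fin N → ℤ) (L : AddMonoidAlgebra ℚ (Fin N →₀ ℤ)) :
    constantTerm (laurentMonomial v * L) =
      (AddMonoidAlgebra.coeff L : (Fin N →₀ ℤ) →₀ ℚ) (Finsupp.equivFunOnFinite.symm (-v)) := by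
  show (laurentMonomial v * L).coeff 0 = _
  unfold laurentMonomial
  rw [AddMonoidAlgebra.coeff_single_mul_apply, one_mul, add_zero]
  congr 1
  ext k; simp

lemma ct_lm_mul_eq_zero {n : ℕ} {v : Fin (n+1) → ℤ}
    {L : AddMonoidAlgebra ℚ (Fin (n+1) →₀ ℤ)}
    (hL : ∀ w ∈ (AddMonoidAlgebra.coeff L : (Fin (n+1) →₀ ℤ) →₀ ℚ).support, w 0 = 0)
    (hv : v 0 ≠ 0) :
    constantTerm (laurentMonomial v * L) = 0 := by
  rw [ct_lm_mul]
  by_contra h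
  have := hL _ (Finsupp.mem_support_iff.2 h)
  simp only [Finsupp.coe_equivFunOnFinite_symm, Pi.neg_apply, neg_eq_zero] at this
  exact hv this

lemma expand {n N : ℕ} (b : Fin n → ℕ) (v : Fin n → Fin N → ℤ)
    (g : AddMonoidAlgebra ℚ (Fin N →₀ ℤ)) :
    constantTerm ((∏ l, (1 - laurentMonomial (v l)) ^ (b l)) * g)
      = ∑ j ∈ Fintype.piFinset (fun l => Finset.range (b l + 1)),
          ((-1 : ℚ) ^ (∑ l, j l) * ∏ l, (Nat.choose (b l) (j l) : ℚ)) *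
            constantTerm (laurentMonomial (∑ l, (j l : ℤ) • v l) * g) := by
  have h1 : ∀ l : Fin n, (1 - laurentMonomial (v l)) ^ (b l) =
      ∑ k ∈ Finset.range (b l + 1),
        ((-1 : AddMonoidAlgebra ℚ (Fin N →₀ ℤ)) ^ k *
            ((b l).choose k : AddMonoidAlgebra ℚ (Fin N →₀ ℤ)))
          * laurentMonomial ((k : ℤ) • v l) := by
    intro l
    rw [sub_eq_neg_add, add_pow]
    refine Finset.sum_congr rfl fun k hk => ?_
    rw [one_pow, neg_pow, lm_pow]
    ring
  simp only [h1]
  rw [Finset.prod_univ_sum, Finset.sum_mul, ct_sum]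
  refine Finset.sum_congr rfl fun j hj => ?_
  have h2 : (∏ l, ((-1 : AddMonoidAlgebra ℚ (Fin N →₀ ℤ)) ^ (j l) *
        ((b l).choose (j l) : AddMonoidAlgebra ℚ (Fin N →₀ ℤ)))
          * laurentMonomial ((j l : ℤ) • v l)) * g
      = ((((-1 : ℤ)) ^ (∑ l, j l) : ℤ) : AddMonoidAlgebra ℚ (Fin N →₀ ℤ)) *
          ((((∏ l, (b l).choose (j l)) : ℕ) : AddMonoidAlgebra ℚ (Fin N →₀ ℤ))
            * (laurentMonomial (∑ l, (j l : ℤ) • v l) * g)) := by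
    rw [← lm_prod]
    push_cast
    rw [Finset.prod_mul_distrib, Finset.prod_mul_distrib, Finset.prod_pow_eq_pow_sum]
    ring
  rw [h2, ct_intCast_mul, ct_natCast_mul]
  push_cast
  ring

variable {n : ℕ}

/-- `Sn j = ∑ (j l) e_{l+1}` -/
noncomputable def Sn (j : Fin n → ℕ) : Fin (n+1) → ℤ :=
  ∑ l, (j l : ℤ) • Pi.single (l.succ : Fin (n+1)) (1:ℤ)

noncomputable def vJ (j : Fin n → ℕ) : Fin (n+1) → ℤ :=
  ∑ l, (j l : ℤ) • (Pi.single (l.succ : Fin (n+1)) (1:ℤ) - Pi.single 0 1)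

noncomputable def wI (i : Fin n → ℕ) : Fin (n+1) → ℤ :=
  ∑ l, (i l : ℤ) • (Pi.single (0 : Fin (n+1)) (1:ℤ) - Pi.single l.succ 1)

lemma vJ_eq (j : Fin n → ℕ) :
    vJ j = Sn j - ((∑ l, j l : ℕ) : ℤ) • Pi.single (0 : Fin (n+1)) (1:ℤ) := by
  unfold vJ Sn
  push_cast
  simp only [smul_sub]
  rw [Finset.sum_sub_distrib]
  congr 1
  rw [Finset.sum_smul]

lemma wI_eq (i : Fin n → ℕ) :
    wI i = ((∑ l, i l : ℕ) : ℤ) • Pi.single (0 : Fin (n+1)) (1:ℤ) - Sn i := by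
  unfold wI Sn
  push_cast
  simp only [smul_sub]
  rw [Finset.sum_sub_distrib]
  congr 1
  rw [Finset.sum_smul]

lemma Sn_apply0 (j : Fin n → ℕ) : Sn j 0 = 0 := by
  unfold Sn
  rw [Finset.sum_apply]
  refine Finset.sum_eq_zero fun l _ => ?_
  rw [Pi.smul_apply, Pi.single_eq_of_ne (Fin.succ_ne_zero l).symm, smul_zero]

lemma vJ_apply0 (j : Fin n → ℕ) : vJ j 0 = -((∑ l, j l : ℕ) : ℤ) := by
  rw [vJ_eq, Pi.sub_apply, Sn_apply0, Pi.smul_apply, Pi.single_eq_same]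
  simp

lemma wI_apply0 (i : Fin n → ℕ) : wI i 0 = ((∑ l, i l : ℕ) : ℤ) := by
  rw [wI_eq, Pi.sub_apply, Sn_apply0, Pi.smul_apply, Pi.single_eq_same]
  simp

lemma wv_vec_eq {i j : Fin n → ℕ} (h : (∑ l, j l) = ∑ l, i l) :
    wI i + vJ j = Sn j - Sn i := by
  rw [vJ_eq, wI_eq, h]
  abel

lemma neg_Sn (i : Fin n → ℕ) :
    (∑ l, Pi.single (l.succ : Fin (n+1)) (-(i l : ℤ))) = - Sn i := by
  unfold Sn
  have h : ∀ l : Fin n, Pi.single (l.succ : Fin (n+1)) (-(i l : ℤ)) =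
      (-((i l : ℤ) • Pi.single (l.succ : Fin (n+1)) (1:ℤ)) : Fin (n+1) → ℤ) := by
    intro l
    rw [← neg_smul]
    have : (-(i l : ℤ)) = (-(i l : ℤ)) • (1:ℤ) := by simp
    rw [this, Pi.single_smul]
    norm_num
  simp only [h]
  rw [Finset.sum_neg_distrib]

/-- the fixed factor `C = ∏ (1 - x_0/x_l)^{a_l} · L` -/
noncomputable def Cc (n : ℕ) (a : Fin n → ℕ) (L : AddMonoidAlgebra ℚ (Fin (n+1) →₀ ℤ)) :
    AddMonoidAlgebra ℚ (Fin (n+1) →₀ ℤ) :=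
  (∏ l, (1 - laurentMonomial
      (Pi.single (0 : Fin (n + 1)) 1 - Pi.single (l.succ : Fin (n + 1)) 1)) ^ (a l)) * L

/-- `cc j = CT( x^{vJ j} · C )` -/
noncomputable def cc (n : ℕ) (a : Fin n → ℕ) (L : AddMonoidAlgebra ℚ (Fin (n+1) →₀ ℤ))
    (j : Fin n → ℕ) : ℚ :=
  constantTerm (laurentMonomial (vJ j) * Cc n a L)

lemma cc_expand (a : Fin n → ℕ) (L : AddMonoidAlgebra ℚ (Fin (n+1) →₀ ℤ)) (j : Fin n → ℕ) :
    cc n a L j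
      = ∑ i ∈ Fintype.piFinset (fun l => Finset.range (a l + 1)),
          ((-1 : ℚ) ^ (∑ l, i l) * ∏ l, (Nat.choose (a l) (i l) : ℚ)) *
            constantTerm (laurentMonomial (wI i + vJ j) * L) := by
  unfold cc Cc
  rw [mul_left_comm]
  refine (expand a (fun l => Pi.single (0 : Fin (n + 1)) 1 - Pi.single (l.succ : Fin (n + 1)) 1)
    (laurentMonomial (vJ j) * L)).trans ?_
  refine Finset.sum_congr rfl fun i hi => ?_
  rw [← mul_assoc, lm_mul]
  rfl

lemma cc_bound {a : Fin n → ℕ} {L : AddMonoidAlgebra ℚ (Fin (n+1) →₀ ℤ)}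
    (hL : ∀ w ∈ (AddMonoidAlgebra.coeff L : (Fin (n + 1) →₀ ℤ) →₀ ℚ).support, w 0 = 0)
    {j : Fin n → ℕ} (hj : (∑ l, a l) < ∑ l, j l) : cc n a L j = 0 := by
  rw [cc_expand]
  refine Finset.sum_eq_zero fun i hi => ?_
  have hi' : ∀ l, i l ≤ a l := by
    intro l
    have := (Fintype.mem_piFinset.1 hi) l
    rw [Finset.mem_range] at this
    omega
  have hsum : (∑ l, i l) ≤ ∑ l, a l := Finset.sum_le_sum fun l _ => hi' l
  have h0 : (wI i + vJ j) 0 ≠ 0 := by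
    rw [Pi.add_apply, wI_apply0, vJ_apply0]
    have h2 : (∑ l, i l) < ∑ l, j l := lt_of_le_of_lt hsum hj
    omega
  rw [ct_lm_mul_eq_zero hL h0, mul_zero]

lemma cc_top {a : Fin n → ℕ} {L : AddMonoidAlgebra ℚ (Fin (n+1) →₀ ℤ)}
    (hL : ∀ w ∈ (AddMonoidAlgebra.coeff L : (Fin (n + 1) →₀ ℤ) →₀ ℚ).support, w 0 = 0)
    {j : Fin n → ℕ} (hj : (∑ l, j l) = ∑ l, a l) :
    cc n a L j = (-1 : ℚ) ^ (∑ l, a l) *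
      constantTerm (laurentMonomial (Sn j - Sn a) * L) := by
  rw [cc_expand]
  have hmem : a ∈ Fintype.piFinset (fun l : Fin n => Finset.range (a l + 1)) :=
    Fintype.mem_piFinset.2 fun l => Finset.mem_range.2 (by omega)
  rw [Finset.sum_eq_single_of_mem a hmem]
  · rw [wv_vec_eq hj]
    simp [Nat.choose_self]
  · intro i hi hne
    have hi' : ∀ l, i l ≤ a l := by
      intro l
      have := (Fintype.mem_piFinset.1 hi) l
      rw [Finset.mem_range] at this
      omega
    have hlt : (∑ l, i l) < ∑ l, a l := by
      obtain ⟨l0, hl0⟩ : ∃ l, i l ≠ a l := by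
        by_contra hc
        push_neg at hc
        exact hne (funext hc)
      exact Finset.sum_lt_sum (fun l _ => hi' l) ⟨l0, Finset.mem_univ l0,
        lt_of_le_of_ne (hi' l0) hl0⟩
    have h0 : (wI i + vJ j) 0 ≠ 0 := by
      rw [Pi.add_apply, wI_apply0, vJ_apply0, hj]
      omega
    rw [ct_lm_mul_eq_zero hL h0, mul_zero]

end GLXZ

/-- Gessel–Lv–Xin–Zhou: as a function of `a₀`, the constant term of
`∏_{l=1}^n (1 - x_l/x_0)^{a₀} (1 - x_0/x_l)^{a_l} · L(x_1,…,x_n)` is a polynomial in `a₀`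
of degree at most `a_1 + ⋯ + a_n`, whose coefficient in degree `a_1 + ⋯ + a_n` is
`1/(a_1+⋯+a_n)!` times the constant term of
`(x_1 + ⋯ + x_n)^{a_1+⋯+a_n} ∏_l x_l^{-a_l} · L`. Here `x_0` is the variable indexed by
`0 : Fin (n+1)`, `x_l` is indexed by `l.succ` for `l : Fin n`, and the Laurent polynomial
`L` is independent of `x_0` (its support exponents vanish at `0`). -/
theorem gessel_lv_xin_zhou (n : ℕ) (a : Fin n → ℕ)
    (L : AddMonoidAlgebra ℚ (Fin (n + 1) →₀ ℤ))
    (hL : ∀ v ∈ (AddMonoidAlgebra.coeff L : (Fin (n + 1) →₀ ℤ) →₀ ℚ).support, v 0 = 0) :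
    ∃ q : Polynomial ℚ,
      q.degree ≤ (∑ l, a l : ℕ) ∧
      (∀ a₀ : ℕ,
        q.eval (a₀ : ℚ) =
          constantTerm
            ((∏ l : Fin n,
                (1 - laurentMonomial
                    (Pi.single (l.succ : Fin (n + 1)) 1 - Pi.single 0 1)) ^ a₀ *
                  (1 - laurentMonomial
                      (Pi.single (0 : Fin (n + 1)) 1 -
                        Pi.single (l.succ : Fin (n + 1)) 1)) ^ (a l)) * L)) ∧
      q.coeff (∑ l, a l) =
        (1 / ((∑ l, a l).factorial : ℚ)) *
          constantTerm
            ((∑ l : Fin n, laurentMonomial (Pi.single (l.succ : Fin (n + 1)) 1)) ^ (∑ l, a l) *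
              (∏ l : Fin n,
                laurentMonomial (Pi.single (l.succ : Fin (n + 1)) (-(a l : ℤ)))) * L) := by
  classical
  set A := ∑ l, a l with hA
  set Box : ℕ → Finset (Fin n → ℕ) :=
    fun m => Fintype.piFinset (fun _ : Fin n => Finset.range (m+1)) with hBox
  set c : (Fin n → ℕ) → ℚ := fun j => GLXZ.cc n a L j with hc
  refine ⟨∑ j ∈ Box A,
      (((-1 : ℚ) ^ (∑ l, j l) * c j * (∏ l, ((j l).factorial : ℚ))⁻¹) •
        ∏ l, descPochhammer ℚ (j l)), ?_, ?_, ?_⟩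
  · -- degree bound
    refine le_trans (Polynomial.degree_sum_le _ _) ?_
    refine Finset.sup_le fun j hj => ?_
    by_cases hcj : c j = 0
    · simp [hcj]
    · have hsum : (∑ l, j l) ≤ A := by
        by_contra hgt
        exact hcj (GLXZ.cc_bound hL (lt_of_not_ge hgt))
      refine le_trans (Polynomial.degree_smul_le _ _) ?_
      refine le_trans Polynomial.degree_le_natDegree ?_
      rw [Polynomial.natDegree_prod_of_monic _ _ fun l _ => monic_descPochhammer ℚ (j l)]
      simp only [descPochhammer_natDegree]
      exact_mod_cast hsum
  · -- evaluation
    intro a₀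
    have hrhs :
        constantTerm
          ((∏ l : Fin n,
              (1 - laurentMonomial
                  (Pi.single (l.succ : Fin (n + 1)) 1 - Pi.single 0 1)) ^ a₀ *
                (1 - laurentMonomial
                    (Pi.single (0 : Fin (n + 1)) 1 -
                      Pi.single (l.succ : Fin (n + 1)) 1)) ^ (a l)) * L)
          = ∑ j ∈ Box a₀,
              ((-1 : ℚ) ^ (∑ l, j l) * ∏ l, (Nat.choose a₀ (j l) : ℚ)) * c j := by
      rw [Finset.prod_mul_distrib, mul_assoc]
      refine (GLXZ.expand (fun _ => a₀)
        (fun l => Pi.single (l.succ : Fin (n + 1)) 1 - Pi.single 0 1) (GLXZ.Cc n a L)).trans ?_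
      rfl
    rw [hrhs, Polynomial.eval_finset_sum]
    have heval : ∀ j : Fin n → ℕ,
        ((((-1 : ℚ) ^ (∑ l, j l) * c j * (∏ l, ((j l).factorial : ℚ))⁻¹) •
          ∏ l, descPochhammer ℚ (j l)).eval (a₀ : ℚ))
        = ((-1 : ℚ) ^ (∑ l, j l) * ∏ l, (Nat.choose a₀ (j l) : ℚ)) * c j := by
      intro j
      rw [Polynomial.eval_smul, smul_eq_mul, Polynomial.eval_prod]
      have h1 : ∀ l : Fin n, (descPochhammer ℚ (j l)).eval ((a₀ : ℚ))
          = ((j l).factorial : ℚ) * (Nat.choose a₀ (j l) : ℚ) := by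
        intro l
        rw [descPochhammer_eval_eq_descFactorial]
        rw_mod_cast [Nat.descFactorial_eq_factorial_mul_choose]
      simp only [h1]
      rw [Finset.prod_mul_distrib]
      have hfz : (∏ l, ((j l).factorial : ℚ)) ≠ 0 :=
        Finset.prod_ne_zero_iff.2 fun l _ => Nat.cast_ne_zero.2 (Nat.factorial_ne_zero _)
      field_simp
    simp only [heval]
    -- swap index sets
    set G : (Fin n → ℕ) → ℚ :=
      fun j => ((-1 : ℚ) ^ (∑ l, j l) * ∏ l, (Nat.choose a₀ (j l) : ℚ)) * c j with hG
    show ∑ j ∈ Box A, G j = ∑ j ∈ Box a₀, G j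
    have hsub : ∀ m : ℕ, m ≤ max a₀ A → Box m ⊆ Box (max a₀ A) := by
      intro m hm
      exact Fintype.piFinset_subset _ _ fun l => Finset.range_subset_range.2 (by omega)
    have h1 : ∑ j ∈ Box a₀, G j = ∑ j ∈ Box (max a₀ A), G j := by
      refine Finset.sum_subset (hsub a₀ (le_max_left _ _)) fun j hjM hj => ?_
      obtain ⟨l, hl⟩ : ∃ l, ¬ (j l ∈ Finset.range (a₀ + 1)) := by
        by_contra hcon
        push_neg at hcon
        exact hj (Fintype.mem_piFinset.2 hcon)
      rw [Finset.mem_range] at hl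
      have : Nat.choose a₀ (j l) = 0 := Nat.choose_eq_zero_of_lt (by omega)
      have hz : (Nat.choose a₀ (j l) : ℚ) = 0 := by exact_mod_cast this
      show ((-1 : ℚ) ^ (∑ l', j l') * ∏ l', (Nat.choose a₀ (j l') : ℚ)) * c j = 0
      rw [Finset.prod_eq_zero (Finset.mem_univ l) hz]
      ring
    have h2 : ∑ j ∈ Box A, G j = ∑ j ∈ Box (max a₀ A), G j := by
      refine Finset.sum_subset (hsub A (le_max_right _ _)) fun j hjM hj => ?_
      obtain ⟨l, hl⟩ : ∃ l, ¬ (j l ∈ Finset.range (A + 1)) := by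
        by_contra hcon
        push_neg at hcon
        exact hj (Fintype.mem_piFinset.2 hcon)
      rw [Finset.mem_range] at hl
      have hAlt : A < ∑ l', j l' := by
        have hle : j l ≤ ∑ l', j l' :=
          Finset.single_le_sum (f := fun l' => j l') (fun _ _ => Nat.zero_le _)
            (Finset.mem_univ l)
        omega
      have hcz : c j = 0 := GLXZ.cc_bound hL hAlt
      show ((-1 : ℚ) ^ (∑ l', j l') * ∏ l', (Nat.choose a₀ (j l') : ℚ)) * c j = 0
      rw [hcz, mul_zero]
    rw [h1, h2]
  · -- leading coefficient
    have hcoeff : ∀ j ∈ Box A,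
        ((((-1 : ℚ) ^ (∑ l, j l) * c j * (∏ l, ((j l).factorial : ℚ))⁻¹) •
          ∏ l, descPochhammer ℚ (j l)).coeff A)
        = if (∑ l, j l) = A then (∏ l, ((j l).factorial : ℚ))⁻¹ *
            constantTerm (laurentMonomial (GLXZ.Sn j - GLXZ.Sn a) * L) else 0 := by
      intro j _
      rw [Polynomial.coeff_smul, smul_eq_mul]
      have hnd : (∏ l, descPochhammer ℚ (j l)).natDegree = ∑ l, j l := by
        rw [Polynomial.natDegree_prod_of_monic _ _ fun l _ => monic_descPochhammer ℚ (j l)]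
        simp only [descPochhammer_natDegree]
      rcases lt_trichotomy (∑ l, j l) A with hlt | heq | hgt
      · rw [if_neg (by omega)]
        rw [Polynomial.coeff_eq_zero_of_natDegree_lt (by rw [hnd]; exact hlt), mul_zero]
      · rw [if_pos heq]
        have hmonic : (∏ l, descPochhammer ℚ (j l)).Monic :=
          Polynomial.monic_prod_of_monic _ _ fun l _ => monic_descPochhammer ℚ (j l)
        have hco1 : (∏ l, descPochhammer ℚ (j l)).coeff A = 1 := by
          have := hmonic.coeff_natDegree
          rwa [hnd, heq] at this
        rw [hco1, mul_one]
        have heq' : (∑ l, j l) = ∑ l, a l := by rw [heq, hA]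
        have hct : c j = (-1 : ℚ) ^ (∑ l, a l) *
            constantTerm (laurentMonomial (GLXZ.Sn j - GLXZ.Sn a) * L) :=
          GLXZ.cc_top hL heq'
        rw [hct, heq, ← hA]
        have hsq : (-1 : ℚ) ^ A * (-1 : ℚ) ^ A = 1 := by
          rw [← pow_add]
          exact Even.neg_one_pow ⟨A, rfl⟩
        linear_combination ((∏ l, ((j l).factorial : ℚ))⁻¹ *
          constantTerm (laurentMonomial (GLXZ.Sn j - GLXZ.Sn a) * L)) * hsq
      · rw [if_neg (by omega)]
        have hcz : c j = 0 := GLXZ.cc_bound hL hgt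
        rw [hcz]
        ring
    rw [Polynomial.finset_sum_coeff, Finset.sum_congr rfl hcoeff]
    have hsub : piAntidiag (univ : Finset (Fin n)) A ⊆ Box A := by
      intro j hj
      rw [Finset.mem_piAntidiag] at hj
      refine Fintype.mem_piFinset.2 fun l => Finset.mem_range.2 ?_
      have hle : j l ≤ ∑ l', j l' :=
        Finset.single_le_sum (f := fun l' => j l') (fun _ _ => Nat.zero_le _)
          (Finset.mem_univ l)
      have h1 := hj.1
      have h2 : univ.sum j = ∑ l', j l' := rfl
      omega
    have hswap : (∑ j ∈ Box A, if (∑ l, j l) = A then (∏ l, ((j l).factorial : ℚ))⁻¹ *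
            constantTerm (laurentMonomial (GLXZ.Sn j - GLXZ.Sn a) * L) else 0)
        = ∑ j ∈ piAntidiag (univ : Finset (Fin n)) A, (∏ l, ((j l).factorial : ℚ))⁻¹ *
            constantTerm (laurentMonomial (GLXZ.Sn j - GLXZ.Sn a) * L) := by
      rw [← Finset.sum_subset hsub (fun j hjB hjn => if_neg fun hcon => hjn
        (Finset.mem_piAntidiag.2 ⟨hcon, fun _ _ => Finset.mem_univ _⟩))]
      refine Finset.sum_congr rfl fun j hj => if_pos ?_
      exact (Finset.mem_piAntidiag.1 hj).1
    rw [hswap]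
    have hRHS : constantTerm
        ((∑ l : Fin n, laurentMonomial (Pi.single (l.succ : Fin (n + 1)) 1)) ^ A *
          (∏ l : Fin n, laurentMonomial (Pi.single (l.succ : Fin (n + 1)) (-(a l : ℤ)))) * L)
        = ∑ k ∈ piAntidiag (univ : Finset (Fin n)) A,
            (Nat.multinomial (univ : Finset (Fin n)) k : ℚ) *
              constantTerm (laurentMonomial (GLXZ.Sn k - GLXZ.Sn a) * L) := by
      rw [Finset.sum_pow_eq_sum_piAntidiag, Finset.sum_mul, Finset.sum_mul, GLXZ.ct_sum]
      refine Finset.sum_congr rfl fun k hk => ?_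
      have h1 : (∏ l : Fin n, laurentMonomial (Pi.single (l.succ : Fin (n + 1)) (1:ℤ)) ^ (k l))
          = laurentMonomial (GLXZ.Sn k) := by
        simp only [GLXZ.lm_pow]
        rw [GLXZ.lm_prod]
        rfl
      have h2 : (∏ l : Fin n, laurentMonomial (Pi.single (l.succ : Fin (n + 1)) (-(a l : ℤ))))
          = laurentMonomial (-(GLXZ.Sn a)) := by
        rw [GLXZ.lm_prod, GLXZ.neg_Sn]
      have h3 : (((Nat.multinomial (univ : Finset (Fin n)) k : ℕ) :
            AddMonoidAlgebra ℚ (Fin (n+1) →₀ ℤ)) *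
            (∏ l : Fin n, laurentMonomial (Pi.single (l.succ : Fin (n + 1)) (1:ℤ)) ^ (k l))) *
            (∏ l : Fin n, laurentMonomial (Pi.single (l.succ : Fin (n + 1)) (-(a l : ℤ)))) * L
          = ((Nat.multinomial (univ : Finset (Fin n)) k : ℕ) :
              AddMonoidAlgebra ℚ (Fin (n+1) →₀ ℤ)) *
            (laurentMonomial (GLXZ.Sn k - GLXZ.Sn a) * L) := by
        rw [h1, h2, mul_assoc, mul_assoc, ← mul_assoc (laurentMonomial (GLXZ.Sn k)),
          GLXZ.lm_mul, ← sub_eq_add_neg]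
      rw [h3, GLXZ.ct_natCast_mul]
    rw [hRHS, Finset.mul_sum]
    refine Finset.sum_congr rfl fun k hk => ?_
    have hs : (∑ l, k l) = A := (Finset.mem_piAntidiag.1 hk).1
    have hspec := Nat.multinomial_spec (univ : Finset (Fin n)) k
    rw [hs] at hspec
    have hcast : (∏ l, ((k l).factorial : ℚ)) * (Nat.multinomial (univ : Finset (Fin n)) k : ℚ)
        = (A.factorial : ℚ) := by exact_mod_cast hspec
    have hf0 : (∏ l, ((k l).factorial : ℚ)) ≠ 0 :=
      Finset.prod_ne_zero_iff.2 fun l _ => Nat.cast_ne_zero.2 (Nat.factorial_ne_zero _)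
    have hA0 : ((A.factorial : ℕ) : ℚ) ≠ 0 := Nat.cast_ne_zero.2 (Nat.factorial_ne_zero _)
    have hm0 : (Nat.multinomial (univ : Finset (Fin n)) k : ℚ) ≠ 0 :=
      Nat.cast_ne_zero.2 (Nat.multinomial_pos _ _).ne'
    have hinv : (∏ l, ((k l).factorial : ℚ))⁻¹
        = (1 / (A.factorial : ℚ)) * (Nat.multinomial (univ : Finset (Fin n)) k : ℚ) := by
      rw [← hcast, one_div, mul_inv, mul_assoc, inv_mul_cancel₀ hm0, mul_one]
    rw [hinv]
    ring
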